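/- Let S be a d×d symmetric positive definite matrix with diagonal part Z = Diag(S_{ii}), and suppose Z < I_d and Z + S < 2 I_d (in the Loewner order). Then Σ := I_d - (1/2)(I_d - Z)^{-1/2}(S - Z)(I_d - Z)^{-1/2} is symmetric positive definite with Σ_{ii} = 1 for every i. -/

import Mathlib

open Matrix

lemma posDef_conj_aux {n : Type*} [Fintype n] [DecidableEq n]
    {A B : Matrix n n ℝ} (hA : A.PosDef) (hB : IsUnit B) :
    (Bᴴ * A * B).PosDef := by
  rw [posDef_iff_dotProduct_mulVec]
  constructor
  · exact isHermitian_conjTranspose_mul_mul B hA.1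
  · intro x hx
    have hBx : B *ᵥ x ≠ 0 := fun h =>
      hx (by simpa using (mulVec_injective_iff_isUnit.2 hB) (h.trans (mulVec_zero B).symm))
    simpa only [star_mulVec, dotProduct_mulVec, vecMul_vecMul] using hA.dotProduct_mulVec_pos hBx

lemma posDef_smul_aux {n : Type*} [Fintype n] {A : Matrix n n ℝ} (hA : A.PosDef)
    {c : ℝ} (hc : 0 < c) : (c • A).PosDef := by
  rw [posDef_iff_dotProduct_mulVec]
  constructor
  · show (c • A)ᴴ = c • A
    rw [Matrix.conjTranspose_smul, hA.1.eq]
    simp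
  · intro x hx
    have := hA.dotProduct_mulVec_pos hx
    rw [Matrix.smul_mulVec, dotProduct_smul]
    exact mul_pos hc this

/-- If `S` is symmetric positive definite with diagonal `Z`, `Z < I` and `Z + S < 2I`
(Loewner order), then `Σ = I - (1/2)(I-Z)^{-1/2}(S-Z)(I-Z)^{-1/2}` is symmetric positive
definite with unit diagonal. -/
theorem sigma_posDef_unit_diagonal
    (d : ℕ) (S : Matrix (Fin d) (Fin d) ℝ) (hS : S.PosDef)
    (hZ : (1 - Matrix.diagonal (fun i => S i i)).PosDef)
    (hZS : ((2 : ℝ) • (1 : Matrix (Fin d) (Fin d) ℝ) -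
      (Matrix.diagonal (fun i => S i i) + S)).PosDef) :
    ((1 : Matrix (Fin d) (Fin d) ℝ) -
        (2⁻¹ : ℝ) • (Matrix.diagonal (fun i => (Real.sqrt (1 - S i i))⁻¹) *
          (S - Matrix.diagonal fun i => S i i) *
          Matrix.diagonal fun i => (Real.sqrt (1 - S i i))⁻¹)).PosDef ∧
      ∀ i, ((1 : Matrix (Fin d) (Fin d) ℝ) -
        (2⁻¹ : ℝ) • (Matrix.diagonal (fun i => (Real.sqrt (1 - S i i))⁻¹) *
          (S - Matrix.diagonal fun i => S i i) *
          Matrix.diagonal fun i => (Real.sqrt (1 - S i i))⁻¹)) i i = 1 := by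
  set Z : Matrix (Fin d) (Fin d) ℝ := Matrix.diagonal (fun i => S i i) with hZdef
  set D : Matrix (Fin d) (Fin d) ℝ :=
    Matrix.diagonal (fun i => (Real.sqrt (1 - S i i))⁻¹) with hDdef
  -- diagonal entries positive
  have hdiagpos : ∀ i, 0 < 1 - S i i := by
    intro i
    have h1 : (1 : Matrix (Fin d) (Fin d) ℝ) - Z
        = Matrix.diagonal (fun i => 1 - S i i) := by
      rw [hZdef, ← Matrix.diagonal_one, Matrix.diagonal_sub]
    rw [h1] at hZ
    exact Matrix.posDef_diagonal_iff.mp hZ i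
  have hfpos : ∀ i, 0 < (Real.sqrt (1 - S i i))⁻¹ := fun i =>
    inv_pos.mpr (Real.sqrt_pos.mpr (hdiagpos i))
  have hDunit : IsUnit D := (Matrix.PosDef.diagonal hfpos).isUnit
  -- key identity: D * (I - Z) * D = 1
  have hDZD : D * ((1 : Matrix (Fin d) (Fin d) ℝ) - Z) * D = 1 := by
    rw [hZdef, hDdef, ← Matrix.diagonal_one, Matrix.diagonal_sub,
      Matrix.diagonal_mul_diagonal, Matrix.diagonal_mul_diagonal]
    have hf : ∀ i, (Real.sqrt (1 - S i i))⁻¹ * (1 - S i i) * (Real.sqrt (1 - S i i))⁻¹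
        = (1 : ℝ) := by
      intro i
      have h := hdiagpos i
      have hsne : Real.sqrt (1 - S i i) ≠ 0 := (Real.sqrt_pos.mpr h).ne'
      field_simp
      rw [Real.sq_sqrt h.le]
    simp only [hf]
  -- rewrite Σ
  have key : (1 : Matrix (Fin d) (Fin d) ℝ) - (2⁻¹ : ℝ) • (D * (S - Z) * D)
      = (2⁻¹ : ℝ) • (D * ((2 : ℝ) • (1 : Matrix (Fin d) (Fin d) ℝ) - (Z + S)) * D) := by
    have h2 : ((2 : ℝ) • (1 : Matrix (Fin d) (Fin d) ℝ) - (Z + S))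
        = (2 : ℝ) • ((1 : Matrix (Fin d) (Fin d) ℝ) - Z) - (S - Z) := by
      ring_nf
      module
    rw [h2]
    conv_rhs => rw [Matrix.mul_sub, Matrix.sub_mul, Matrix.mul_smul, Matrix.smul_mul, hDZD]
    rw [smul_sub, smul_smul]
    norm_num
  rw [key]
  constructor
  · have hconj : (Dᴴ * ((2 : ℝ) • (1 : Matrix (Fin d) (Fin d) ℝ) - (Z + S)) * D).PosDef :=
      posDef_conj_aux hZS hDunit
    have hDH : Dᴴ = D := by
      rw [hDdef, Matrix.diagonal_conjTranspose]
      simp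
    rw [hDH] at hconj
    exact posDef_smul_aux hconj (by norm_num)
  · intro i
    have hdiag : (D * ((2 : ℝ) • (1 : Matrix (Fin d) (Fin d) ℝ) - (Z + S)) * D) i i
        = (Real.sqrt (1 - S i i))⁻¹ * (2 - (S i i + S i i)) * (Real.sqrt (1 - S i i))⁻¹ := by
      rw [hDdef, Matrix.mul_apply]
      simp only [Matrix.diagonal_apply, Matrix.mul_apply]
      rw [Finset.sum_eq_single i]
      · simp [Finset.sum_eq_single i, hZdef, Matrix.one_apply, Matrix.diagonal_apply]
      · intro b _ hb; simp [hb]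
      · simp
    rw [Matrix.smul_apply, hdiag]
    have h := hdiagpos i
    have hs : Real.sqrt (1 - S i i) * Real.sqrt (1 - S i i) = 1 - S i i :=
      Real.mul_self_sqrt h.le
    have hsne : Real.sqrt (1 - S i i) ≠ 0 := (Real.sqrt_pos.mpr h).ne'
    field_simp
    rw [Real.sq_sqrt h.le, smul_eq_mul, show 2 - S i i * (1 + 1) = 2 * (1 - S i i) by ring,
      mul_div_assoc, div_self h.ne']
    norm_num
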